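/- Let n ≥ 2. Then, as maps ℝ^n → ℝ^n with the type C_n simple reflections, the composite s_n ∘ (s_{n−1} ∘ s_n) ∘ (s_{n−2} ∘ s_{n−1} ∘ s_n) ∘ ⋯ ∘ (s_1 ∘ s_2 ∘ ⋯ ∘ s_n) — i.e. the product of the blocks [m, n] for m = n, n−1, …, 1, applied right-to-left — equals the map x = (x_1, …, x_n) ↦ (−x_n, −x_{n−1}, …, −x_1). Equivalently, in the Weyl group W(C_n), s_n[n−1,n][n−2,n]⋯[1,n] = w_0 w_n, where w_0 = −id is the longest element of W(C_n) and w_n is the coordinate-reversing permutation, the longest element of the parabolic subgroup generated by s_1, …, s_{n−1}. (This is the identity underlying the reduced expression ω_n = π_n s_n[n−1,n]⋯[1,n] in the extended affine Weyl group of type C_n^{(1)}.) -/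

import Mathlib

noncomputable section

/-- Value of `x : ℝ^n` at the natural (0-indexed) index `m`, or `0` if out of range. -/
def xval {n : ℕ} (x : Fin n → ℝ) (m : ℕ) : ℝ := if h : m < n then x ⟨m, h⟩ else 0

/-- The simple reflections of the Weyl group of type `C_n` acting on `ℝ^n`:
for `1 ≤ j ≤ n-1`, `sC n j` swaps the `j`-th and `(j+1)`-th coordinates (1-indexed);
`sC n n` negates the last coordinate. -/
def sC (n : ℕ) (j : ℕ) (x : Fin n → ℝ) (k : Fin n) : ℝ :=
  if j = n then
    if (k : ℕ) = n - 1 then -x k else x k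
  else
    if (k : ℕ) = j - 1 then xval x j
    else if (k : ℕ) = j then xval x (j - 1)
    else x k

/-- The block `[m,n] = s_m ∘ s_{m+1} ∘ ⋯ ∘ s_n` (rightmost factor applied first). -/
def blkC (n k l : ℕ) : (Fin n → ℝ) → (Fin n → ℝ) :=
  (List.range' k (l + 1 - k)).foldr (fun j f => sC n j ∘ f) id

lemma blkC_apply (n : ℕ) : ∀ (d m : ℕ), 1 ≤ m → m + d = n →
    ∀ (x : Fin n → ℝ) (k : Fin n),
    blkC n m n x k = if (k : ℕ) < m - 1 then x k
      else if (k : ℕ) = m - 1 then -x ⟨n - 1, by have := k.isLt; omega⟩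
      else x ⟨(k : ℕ) - 1, by have := k.isLt; omega⟩ := by
  intro d
  induction d with
  | zero =>
    intro m hm1 hmn x k
    have hm : m = n := by omega
    have hr : n + 1 - m = 1 := by omega
    have hk := k.isLt
    simp only [blkC, hr, List.range'_one, List.foldr_cons, List.foldr_nil,
      Function.comp_apply, id_eq, sC, if_pos hm]
    split_ifs <;>
      first
      | rfl
      | omega
      | (congr 1; exact Fin.ext (by simp only [Fin.val_mk]; omega))
      | (rw [neg_inj]; congr 1; exact Fin.ext (by simp only [Fin.val_mk]; omega))
  | succ d ih =>
    intro m hm1 hmn x k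
    have hmn' : m < n := by omega
    have hr : n + 1 - m = (n - m) + 1 := by omega
    have hr2 : n + 1 - (m + 1) = n - m := by omega
    have hstep : blkC n m n x k = sC n m (blkC n (m+1) n x) k := by
      simp only [blkC, hr, hr2, List.range'_succ, List.foldr_cons, Function.comp_apply]
    rw [hstep]
    have hk := k.isLt
    have hm1n : m - 1 < n := by omega
    simp only [sC, if_neg (show ¬ m = n by omega), xval, dif_pos hmn', dif_pos hm1n,
      ih (m+1) (by omega) (by omega) x ⟨m, hmn'⟩,
      ih (m+1) (by omega) (by omega) x ⟨m-1, hm1n⟩,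
      ih (m+1) (by omega) (by omega) x k, Fin.val_mk]
    split_ifs <;>
      first
      | rfl
      | omega
      | (congr 1; exact Fin.ext (by simp only [Fin.val_mk]; omega))
      | (rw [neg_inj]; congr 1; exact Fin.ext (by simp only [Fin.val_mk]; omega))

lemma P_apply (n : ℕ) (hn : 1 ≤ n) : ∀ (t : ℕ), t ≤ n →
    ∀ (x : Fin n → ℝ) (k : Fin n),
    ((List.range' 1 t).reverse).foldr (fun m f => blkC n m n ∘ f) id x k
      = if (k : ℕ) < t then -x ⟨n - 1 - (k : ℕ), Nat.lt_of_le_of_lt (Nat.sub_le _ _) (by omega)⟩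
        else x ⟨(k : ℕ) - t, by have := k.isLt; omega⟩ := by
  intro t
  induction t with
  | zero =>
    intro _ x k
    simp only [List.range'_zero, List.reverse_nil, List.foldr_nil, id_eq]
    rw [if_neg (by omega)]
    first
    | rfl
    | (congr 1; exact Fin.ext (by simp only [Fin.val_mk]; omega))
  | succ t ih =>
    intro ht x k
    have hstep : ((List.range' 1 (t+1)).reverse).foldr (fun m f => blkC n m n ∘ f) id x k
        = blkC n (1+t) n (((List.range' 1 t).reverse).foldr (fun m f => blkC n m n ∘ f) id x) k := by
      rw [List.range'_concat, List.reverse_append, List.reverse_singleton]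
      simp [Function.comp_apply]
    rw [hstep, blkC_apply n (n - (1+t)) (1+t) (by omega) (by omega)]
    have hk := k.isLt
    simp only [ih (by omega), Fin.val_mk]
    split_ifs <;>
      first
      | rfl
      | omega
      | (congr 1; exact Fin.ext (by simp only [Fin.val_mk]; omega))
      | (rw [neg_inj]; congr 1; exact Fin.ext (by simp only [Fin.val_mk]; omega))

/-- In the Weyl group of type `C_n`, the composite `sₙ ∘ [n−1,n] ∘ [n−2,n] ∘ ⋯ ∘ [1,n]`
(the product of the blocks `[m,n]` for `m = n, n−1, …, 1`, applied right-to-left)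
equals `x ↦ (−xₙ, −x_{n−1}, …, −x₁)`. -/
theorem statement19 (n : ℕ) (hn : 2 ≤ n) :
    ((List.range' 1 n).reverse).foldr (fun m f => blkC n m n ∘ f) id
      = fun x (k : Fin n) => -x ⟨n - 1 - (k : ℕ), by have := k.isLt; omega⟩ := by
  funext x k
  rw [P_apply n (by omega) n le_rfl, if_pos k.isLt]

end
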